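/- In E = Q(√(-14)), the prime ideal P_7 above 7 (where 7 ramifies, (7) = P_7^2) is not principal and its ideal class has order 2 in the class group. -/

import Mathlib

open NumberField Polynomial Module

section AuxSqrtNeg14

variable {E : Type*} [Field E] [NumberField E]

lemma aux_not_rat {s : E} (hs : s ^ 2 = -14) : s ∉ (algebraMap ℚ E).range := by
  rintro ⟨q, rfl⟩
  have h2 : q ^ 2 = -14 := (algebraMap ℚ E).injective (by rw [map_pow, hs]; norm_num)
  nlinarith [sq_nonneg q]

lemma aux_minpoly {s : E} (hs : s ^ 2 = -14) : minpoly ℚ s = X ^ 2 + C 14 := by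
  have hint : IsIntegral ℚ s :=
    ⟨X ^ 2 + C 14, by apply Polynomial.monic_X_pow_add_C; norm_num, by simp [hs]⟩
  have hp : (X ^ 2 + C (14:ℚ)).Monic := by apply Polynomial.monic_X_pow_add_C; norm_num
  have hdvd : minpoly ℚ s ∣ X ^ 2 + C 14 := minpoly.dvd _ _ (by simp [hs])
  have hd2 : (X ^ 2 + C (14:ℚ)).natDegree = 2 := by compute_degree!
  have hle : (minpoly ℚ s).natDegree ≤ 2 := hd2 ▸ Polynomial.natDegree_le_of_dvd hdvd hp.ne_zero
  have hpos : 0 < (minpoly ℚ s).natDegree := minpoly.natDegree_pos hint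
  have hne1 : (minpoly ℚ s).natDegree ≠ 1 := by
    intro h1
    have : (minpoly ℚ s).degree = 1 := by
      rw [Polynomial.degree_eq_natDegree (minpoly.ne_zero hint), h1]; rfl
    exact aux_not_rat hs (minpoly.degree_eq_one_iff.mp this)
  exact (Polynomial.eq_of_monic_of_dvd_of_natDegree_le (minpoly.monic hint) hp hdvd
    (by omega)).symm

lemma aux_finrank {s : E} (hs : s ^ 2 = -14)
    (hgen : IntermediateField.adjoin ℚ {s} = ⊤) : Module.finrank ℚ E = 2 := by
  have hint : IsIntegral ℚ s :=
    ⟨X ^ 2 + C 14, by apply Polynomial.monic_X_pow_add_C; norm_num, by simp [hs]⟩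
  have h1 : Module.finrank ℚ (IntermediateField.adjoin ℚ {s}) = 2 := by
    rw [IntermediateField.adjoin.finrank hint, aux_minpoly hs]
    compute_degree!
  rw [hgen] at h1
  rw [← h1]
  exact (IntermediateField.topEquiv (F := ℚ) (E := E)).toLinearEquiv.finrank_eq.symm

lemma aux_li {s : E} (hs : s ^ 2 = -14) : LinearIndependent ℚ ![(1:E), s] := by
  rw [linearIndependent_fin2]
  constructor
  · show s ≠ 0
    rintro rfl; norm_num at hs
  · intro a h
    simp only [Matrix.cons_val_one, Matrix.head_cons, Matrix.cons_val_zero, Algebra.smul_def] at h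
    exact aux_not_rat hs ⟨a⁻¹, by rw [map_inv₀, eq_inv_of_mul_eq_one_left h, inv_inv]⟩

lemma aux_matrix {s : E} (hs : s ^ 2 = -14) (b : Basis (Fin 2) ℚ E)
    (hb0 : b 0 = 1) (hb1 : b 1 = s) (a c : ℚ) :
    Algebra.leftMulMatrix b (algebraMap ℚ E a + algebraMap ℚ E c * s)
      = !![a, -14*c; c, a] := by
  have key : ∀ u v : ℚ, b.repr (algebraMap ℚ E u + algebraMap ℚ E v * s)
      = Finsupp.single 0 u + Finsupp.single 1 v := by
    intro u v
    have hx : algebraMap ℚ E u + algebraMap ℚ E v * s = u • b 0 + v • b 1 := by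
      rw [hb0, hb1, Algebra.smul_def, Algebra.smul_def, mul_one]
    rw [hx, map_add, map_smul, map_smul, b.repr_self, b.repr_self,
      Finsupp.smul_single, Finsupp.smul_single, smul_eq_mul, smul_eq_mul, mul_one, mul_one]
  have h0 : (algebraMap ℚ E a + algebraMap ℚ E c * s) * b 0
      = algebraMap ℚ E a + algebraMap ℚ E c * s := by rw [hb0, mul_one]
  have h1 : (algebraMap ℚ E a + algebraMap ℚ E c * s) * b 1
      = algebraMap ℚ E (-14*c) + algebraMap ℚ E a * s := by
    rw [hb1, show (algebraMap ℚ E a + algebraMap ℚ E c * s) * s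
      = algebraMap ℚ E a * s + algebraMap ℚ E c * s^2 by ring, hs]
    push_cast
    ring_nf
    norm_num
  ext i j
  rw [Algebra.leftMulMatrix_eq_repr_mul]
  fin_cases j
  · show (b.repr ((algebraMap ℚ E a + algebraMap ℚ E c * s) * b 0)) i = !![a, -14*c; c, a] i 0
    rw [h0, key]
    fin_cases i <;> simp [Finsupp.single_apply]
  · show (b.repr ((algebraMap ℚ E a + algebraMap ℚ E c * s) * b 1)) i = !![a, -14*c; c, a] i 1
    rw [h1, key]
    fin_cases i <;> simp [Finsupp.single_apply]

lemma aux_norm {s : E} (hs : s ^ 2 = -14) (b : Basis (Fin 2) ℚ E)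
    (hb0 : b 0 = 1) (hb1 : b 1 = s) (a c : ℚ) :
    Algebra.norm ℚ (algebraMap ℚ E a + algebraMap ℚ E c * s) = a^2 + 14*c^2 := by
  rw [Algebra.norm_eq_matrix_det b, aux_matrix hs b hb0 hb1, Matrix.det_fin_two_of]; ring

lemma aux_trace {s : E} (hs : s ^ 2 = -14) (b : Basis (Fin 2) ℚ E)
    (hb0 : b 0 = 1) (hb1 : b 1 = s) (a c : ℚ) :
    Algebra.trace ℚ E (algebraMap ℚ E a + algebraMap ℚ E c * s) = 2*a := by
  rw [Algebra.trace_eq_matrix_trace b, aux_matrix hs b hb0 hb1, Matrix.trace_fin_two_of]; ring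

lemma aux_sq (ω : 𝓞 E) (hω : ω ^ 2 = -14) :
    Ideal.span {(7 : 𝓞 E), ω} * Ideal.span {(7 : 𝓞 E), ω} = Ideal.span {(7 : 𝓞 E)} := by
  have h7 : (7 : 𝓞 E) ∈ Ideal.span {(7 : 𝓞 E), ω} := Ideal.subset_span (by simp)
  have hom : ω ∈ Ideal.span {(7 : 𝓞 E), ω} := Ideal.subset_span (by simp)
  apply le_antisymm
  · rw [show ({(7 : 𝓞 E), ω} : Set (𝓞 E)) = insert (7 : 𝓞 E) {ω} by rfl, Ideal.span_insert,
      Ideal.sup_mul, Ideal.mul_sup, Ideal.mul_sup,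
      Ideal.span_singleton_mul_span_singleton, Ideal.span_singleton_mul_span_singleton,
      Ideal.span_singleton_mul_span_singleton, Ideal.span_singleton_mul_span_singleton]
    refine sup_le (sup_le ?_ ?_) (sup_le ?_ ?_) <;>
      rw [Ideal.span_singleton_le_span_singleton]
    · exact ⟨7, by ring⟩
    · exact ⟨ω, by ring⟩
    · exact ⟨ω, by ring⟩
    · exact ⟨-2, by linear_combination hω⟩
  · rw [Ideal.span_le, Set.singleton_subset_iff]
    have key : (7 : 𝓞 E) = 7 * 7 + 3 * (ω * ω) := by linear_combination (-3 : 𝓞 E) * hω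
    have mem : (7 : 𝓞 E) * 7 + 3 * (ω * ω)
        ∈ Ideal.span {(7 : 𝓞 E), ω} * Ideal.span {(7 : 𝓞 E), ω} :=
      add_mem (Ideal.mul_mem_mul h7 h7)
        (Ideal.mul_mem_left _ 3 (Ideal.mul_mem_mul hom hom))
    rw [SetLike.mem_coe]
    rwa [← key] at mem

lemma aux_norm7 (h2 : Module.finrank ℚ E = 2) :
    Ideal.absNorm (Ideal.span {(7 : 𝓞 E)}) = 49 := by
  rw [Ideal.absNorm_span_singleton]
  have h7 : (7 : 𝓞 E) = algebraMap ℤ (𝓞 E) 7 := by simp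
  rw [h7, Algebra.norm_algebraMap_of_basis (NumberField.RingOfIntegers.basis E)]
  have hcard : Fintype.card (Free.ChooseBasisIndex ℤ (𝓞 E)) = 2 := by
    rw [← Module.finrank_eq_card_basis (NumberField.RingOfIntegers.basis E),
      NumberField.RingOfIntegers.rank, h2]
  rw [hcard]
  norm_num

lemma aux_no_sol (t u : ℤ) : 14 * t ^ 2 + u ^ 2 ≠ 392 := by
  intro h
  have h7u : (7 : ℤ) ∣ u := by
    have hd : (7 : ℤ) ∣ u ^ 2 := ⟨56 - 2 * t ^ 2, by linarith⟩
    exact (Int.Prime.dvd_pow' (by norm_num) hd)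
  have h2u : (2 : ℤ) ∣ u := by
    have hd : (2 : ℤ) ∣ u ^ 2 := ⟨196 - 7 * t ^ 2, by linarith⟩
    exact (Int.Prime.dvd_pow' (by norm_num) hd)
  obtain ⟨v, rfl⟩ : (14 : ℤ) ∣ u := by omega
  have h1 : t ^ 2 + 14 * v ^ 2 = 28 := by nlinarith
  have h7t : (7 : ℤ) ∣ t := by
    have hd : (7 : ℤ) ∣ t ^ 2 := ⟨4 - 2 * v ^ 2, by linarith⟩
    exact (Int.Prime.dvd_pow' (by norm_num) hd)
  have h2t : (2 : ℤ) ∣ t := by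
    have hd : (2 : ℤ) ∣ t ^ 2 := ⟨14 - 7 * v ^ 2, by linarith⟩
    exact (Int.Prime.dvd_pow' (by norm_num) hd)
  obtain ⟨w, rfl⟩ : (14 : ℤ) ∣ t := by omega
  have h2 : 14 * w ^ 2 + v ^ 2 = 2 := by nlinarith
  have hw : w = 0 := by nlinarith [sq_nonneg w, sq_nonneg v]
  subst hw
  have hv : v ^ 2 = 2 := by linarith
  have hd : (2 : ℤ) ∣ v ^ 2 := ⟨1, by linarith⟩
  obtain ⟨x, rfl⟩ := Int.Prime.dvd_pow' (by norm_num) hd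
  have h4 : 4 * (x * x) = 2 := by linear_combination hv
  omega

end AuxSqrtNeg14

set_option synthInstance.maxHeartbeats 400000 in
theorem prime_above_seven_order_two
    (E : Type*) [Field E] [NumberField E]
    (s : E) (hs : s ^ 2 = -14)
    (hgen : IntermediateField.adjoin ℚ {s} = ⊤)
    (P : Ideal (𝓞 E)) (hP : P.IsPrime) (hPbot : P ≠ ⊥)
    (h7 : (7 : 𝓞 E) ∈ P) :
    ¬ P.IsPrincipal ∧
      ∀ h : P ∈ nonZeroDivisors (Ideal (𝓞 E)),
        orderOf (ClassGroup.mk0 ⟨P, h⟩) = 2 := by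
  have hintZ : IsIntegral ℤ s :=
    ⟨X ^ 2 + C 14, by apply Polynomial.monic_X_pow_add_C; norm_num, by simp [hs]⟩
  set ω : 𝓞 E := ⟨s, hintZ⟩ with hωdef
  have hωcoe : (algebraMap (𝓞 E) E) ω = s := rfl
  have hωcoe' : ((ω : 𝓞 E) : E) = s := rfl
  have hω : ω ^ 2 = -14 := by
    have hco : (algebraMap (𝓞 E) E) (ω ^ 2) = (algebraMap (𝓞 E) E) (-14) := by
      rw [map_pow, hωcoe, hs, map_neg, map_ofNat]
    exact NumberField.RingOfIntegers.coe_injective hco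
  have h2 : Module.finrank ℚ E = 2 := aux_finrank hs hgen
  -- the basis
  have hcard : Fintype.card (Fin 2) = Module.finrank ℚ E := by simp [h2]
  let b : Basis (Fin 2) ℚ E := basisOfLinearIndependentOfCardEqFinrank (aux_li hs) hcard
  have hb : ⇑b = ![(1:E), s] := coe_basisOfLinearIndependentOfCardEqFinrank _ _
  have hb0 : b 0 = 1 := by rw [hb]; rfl
  have hb1 : b 1 = s := by rw [hb]; rfl
  -- identify P with span {7, ω}
  have homP : ω ∈ P := by
    have hmm : ω * ω ∈ P := by
      have : ω * ω = 7 * (-2) := by linear_combination hω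
      rw [this]
      exact Ideal.mul_mem_right _ _ h7
    rcases hP.mem_or_mem hmm with h | h <;> exact h
  have hIP : Ideal.span {(7 : 𝓞 E), ω} ≤ P := by
    rw [Ideal.span_le]
    rintro x (rfl | rfl)
    · exact h7
    · simpa using homP
  have hI2 : Ideal.span {(7 : 𝓞 E), ω} * Ideal.span {(7 : 𝓞 E), ω}
      = Ideal.span {(7 : 𝓞 E)} := aux_sq ω hω
  have habs : Ideal.absNorm (Ideal.span {(7 : 𝓞 E), ω}) = 7 := by
    have h49 : Ideal.absNorm (Ideal.span {(7 : 𝓞 E), ω})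
        * Ideal.absNorm (Ideal.span {(7 : 𝓞 E), ω}) = 49 := by
      rw [← _root_.map_mul Ideal.absNorm, hI2, aux_norm7 h2]
    have hle : Ideal.absNorm (Ideal.span {(7 : 𝓞 E), ω}) ≤ 7 := by nlinarith
    have hge : 7 ≤ Ideal.absNorm (Ideal.span {(7 : 𝓞 E), ω}) := by nlinarith
    omega
  have hIprime : (Ideal.span {(7 : 𝓞 E), ω}).IsPrime :=
    Ideal.isPrime_of_irreducible_absNorm
      (by rw [habs]; exact (Nat.irreducible_iff_nat_prime 7).mpr (by norm_num))
  have hIbot : Ideal.span {(7 : 𝓞 E), ω} ≠ ⊥ := by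
    intro hbot
    rw [hbot] at habs
    simp [Ideal.absNorm_bot] at habs
  have hImax : (Ideal.span {(7 : 𝓞 E), ω}).IsMaximal := hIprime.isMaximal hIbot
  have hPI : P = Ideal.span {(7 : 𝓞 E), ω} := (hImax.eq_of_le hP.ne_top hIP).symm
  have hP2 : P * P = Ideal.span {(7 : 𝓞 E)} := by rw [hPI]; exact hI2
  have habsP : Ideal.absNorm P = 7 := by rw [hPI]; exact habs
  have hnotpr : ¬ P.IsPrincipal := by
    rintro ⟨α, hα⟩
    have hα' : P = Ideal.span {α} := hα
    have hnatabs : (Algebra.norm ℤ α).natAbs = 7 := by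
      rw [← Ideal.absNorm_span_singleton, ← hα', habsP]
    -- coordinates of α in the basis
    set x : E := ((α : 𝓞 E) : E) with hxdef
    set a : ℚ := b.repr x 0 with hadef
    set c : ℚ := b.repr x 1 with hcdef
    have hx : x = algebraMap ℚ E a + algebraMap ℚ E c * s := by
      conv_lhs => rw [← b.sum_repr x]
      rw [Fin.sum_univ_two, hb0, hb1, Algebra.smul_def, Algebra.smul_def, mul_one]
    have hnormx : Algebra.norm ℚ x = a ^ 2 + 14 * c ^ 2 := by
      rw [hx]; exact aux_norm hs b hb0 hb1 a c
    have hcast : ((Algebra.norm ℤ α : ℤ) : ℚ) = a ^ 2 + 14 * c ^ 2 := by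
      rw [Algebra.coe_norm_int, ← hxdef, hnormx]
    have hN7 : a ^ 2 + 14 * c ^ 2 = 7 := by
      rcases Int.natAbs_eq_iff.mp hnatabs with hN | hN <;> rw [hN] at hcast
      · rw [← hcast]; norm_num
      · exfalso
        push_cast at hcast
        nlinarith [sq_nonneg a, sq_nonneg c]
    -- trace conditions
    set t : ℤ := Algebra.trace ℤ (𝓞 E) α with htdef
    have ht : (t : ℚ) = 2 * a := by
      rw [htdef, Algebra.coe_trace_int, ← hxdef, hx]
      exact aux_trace hs b hb0 hb1 a c
    set u : ℤ := Algebra.trace ℤ (𝓞 E) (ω * α) with hudef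
    have hsx : ((ω * α : 𝓞 E) : E) = algebraMap ℚ E (-14*c) + algebraMap ℚ E a * s := by
      have hmul : ((ω * α : 𝓞 E) : E) = s * x := by
        rw [hxdef]; push_cast; rfl
      rw [hmul, hx, show s * (algebraMap ℚ E a + algebraMap ℚ E c * s)
        = algebraMap ℚ E a * s + algebraMap ℚ E c * s ^ 2 by ring, hs]
      push_cast
      ring_nf
      norm_num
    have hu : (u : ℚ) = 2 * (-14 * c) := by
      rw [hudef, Algebra.coe_trace_int, hsx]
      exact aux_trace hs b hb0 hb1 (-14*c) a
    have hint : 14 * t ^ 2 + u ^ 2 = 392 := by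
      have hq : ((14 * t ^ 2 + u ^ 2 : ℤ) : ℚ) = ((392 : ℤ) : ℚ) := by
        push_cast
        linear_combination (14 * ((t : ℚ) + 2 * a)) * ht + ((u : ℚ) + (-28) * c) * hu + 56 * hN7
      exact_mod_cast hq
    exact aux_no_sol t u hint
  refine ⟨hnotpr, fun h => ?_⟩
  haveI : Fact (Nat.Prime 2) := ⟨Nat.prime_two⟩
  apply orderOf_eq_prime
  · rw [← _root_.map_pow]
    have hmem2 : P ^ 2 ∈ nonZeroDivisors (Ideal (𝓞 E)) := pow_mem h 2
    have hpow : ((⟨P, h⟩ : ↥(nonZeroDivisors (Ideal (𝓞 E)))) ^ 2)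
        = (⟨P ^ 2, hmem2⟩ : ↥(nonZeroDivisors (Ideal (𝓞 E)))) := by
      apply Subtype.ext
      simp
    rw [hpow, ClassGroup.mk0_eq_one_iff]
    exact ⟨⟨7, by rw [pow_two, hP2]⟩⟩
  · intro h1
    rw [ClassGroup.mk0_eq_one_iff] at h1
    exact hnotpr h1
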